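/- Let m ≥ 1 and n ≥ m be integers and μ > 0 a real. Define φ : [0,∞) → ℝ by φ(0) = 0 and φ(t) = t·B_{m,n}(t/μ) for t > 0. Then φ is strictly increasing and strictly convex on [0,∞). -/

import Mathlib

/-- `a_j(r)` coefficients of the M/M/m/n queue. -/
noncomputable def aCoef (m j : ℕ) (r : ℝ) : ℝ :=
  if j ≤ m then r ^ j / (Nat.factorial j : ℝ)
  else (r ^ m / (Nat.factorial m : ℝ)) * (r / (m : ℝ)) ^ (j - m)

/-- Blocking probability `B_{m,n}(r)` of the M/M/m/n queue with offered load `r`. -/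
noncomputable def Bmn (m n : ℕ) (r : ℝ) : ℝ :=
  aCoef m n r / ∑ j ∈ Finset.range (n + 1), aCoef m j r

/-- Mean number in system `L_{m,n}(r)` of the M/M/m/n queue with offered load `r`. -/
noncomputable def Lmn (m n : ℕ) (r : ℝ) : ℝ :=
  (∑ j ∈ Finset.range (n + 1), (j : ℝ) * aCoef m j r) /
    ∑ j ∈ Finset.range (n + 1), aCoef m j r

/-- Erlang-B formula `B_m(r)`. -/
noncomputable def erlangB (m : ℕ) (r : ℝ) : ℝ :=
  (r ^ m / (Nat.factorial m : ℝ)) / ∑ j ∈ Finset.range (m + 1), r ^ j / (Nat.factorial j : ℝ)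

open Finset



private noncomputable def Tail (q : ℕ → ℝ) (n i : ℕ) : ℝ :=
  ∑ k ∈ Finset.range (n + 1 - i), q (i + k)

section TailLemmas
variable {q : ℕ → ℝ} {n : ℕ}

private lemma tail_nonneg (hq : ∀ k ≤ n, 0 < q k) (i : ℕ) : 0 ≤ Tail q n i := by
  apply Finset.sum_nonneg
  intro k hk
  exact le_of_lt (hq (i + k) (by simp only [Finset.mem_range] at hk; omega))

private lemma tail_pos (hq : ∀ k ≤ n, 0 < q k) {i : ℕ} (hi : i ≤ n) : 0 < Tail q n i := by
  apply Finset.sum_pos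
  · intro k hk
    exact hq (i + k) (by simp only [Finset.mem_range] at hk; omega)
  · rw [Finset.nonempty_range_iff]; omega

private lemma tail_succ (hi : i ≤ n) : Tail q n i = q i + Tail q n (i + 1) := by
  unfold Tail
  rw [show n + 1 - i = (n - i) + 1 by omega, Finset.sum_range_succ']
  rw [show n + 1 - (i + 1) = n - i by omega]
  rw [add_comm]
  congr 1
  apply Finset.sum_congr rfl
  intro k _
  rw [show i + (k + 1) = (i + 1) + k by omega]

private lemma lemA (hq : ∀ k ≤ n, 0 < q k)
    (hr : ∀ i j, i ≤ j → j + 1 ≤ n → q i * q (j + 1) ≤ q (i + 1) * q j)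
    {i j : ℕ} (hij : i ≤ j) (hjn : j + 1 ≤ n) :
    q i * Tail q n (j + 1) ≤ q (i + 1) * Tail q n j := by
  have h1 : q i * Tail q n (j + 1) = ∑ k ∈ Finset.range (n - j), q i * q (j + 1 + k) := by
    rw [Tail, Finset.mul_sum, show n + 1 - (j + 1) = n - j by omega]
  have h2 : ∑ k ∈ Finset.range (n - j), q i * q (j + 1 + k)
      ≤ ∑ k ∈ Finset.range (n - j), q (i + 1) * q (j + k) := by
    apply Finset.sum_le_sum
    intro k hk
    simp only [Finset.mem_range] at hk
    have := hr i (j + k) (by omega) (by omega)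
    rw [show j + 1 + k = j + k + 1 by omega]
    exact this
  have h3 : ∑ k ∈ Finset.range (n - j), q (i + 1) * q (j + k) ≤ q (i + 1) * Tail q n j := by
    rw [Tail, Finset.mul_sum, show n + 1 - j = (n - j) + 1 by omega, Finset.sum_range_succ]
    have : 0 ≤ q (i + 1) * q (j + (n - j)) :=
      mul_nonneg (le_of_lt (hq _ (by omega))) (le_of_lt (hq _ (by omega)))
    linarith
  linarith

private lemma lemB (hq : ∀ k ≤ n, 0 < q k)
    (hr : ∀ i j, i ≤ j → j + 1 ≤ n → q i * q (j + 1) ≤ q (i + 1) * q j)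
    {i : ℕ} (hi : i + 2 ≤ n) :
    Tail q n i * Tail q n (i + 2) ≤ Tail q n (i + 1) * Tail q n (i + 1) := by
  have hA := lemA hq hr (Nat.le_succ i) hi
  have e1 : Tail q n i = q i + Tail q n (i + 1) := tail_succ (by omega)
  have e2 : Tail q n (i + 1) = q (i + 1) + Tail q n (i + 2) := tail_succ (by omega)
  have h2 : 0 ≤ Tail q n (i + 2) := tail_nonneg hq _
  nlinarith [tail_nonneg hq (i + 1)]

private lemma lemC' (hq : ∀ k ≤ n, 0 < q k)
    (hr : ∀ i j, i ≤ j → j + 1 ≤ n → q i * q (j + 1) ≤ q (i + 1) * q j)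
    (d : ℕ) : ∀ i, i + d + 1 ≤ n →
    Tail q n i * Tail q n (i + d + 1) ≤ Tail q n (i + 1) * Tail q n (i + d) := by
  induction d with
  | zero => intro i _; rw [mul_comm]; simp
  | succ d ih =>
    intro i h
    have IH := ih i (by omega)
    have hB : Tail q n (i + d) * Tail q n (i + d + 2) ≤ Tail q n (i + d + 1) * Tail q n (i + d + 1) :=
      lemB hq hr (by omega)
    have p1 : 0 < Tail q n (i + d) := tail_pos hq (by omega)
    have p2 : 0 < Tail q n (i + d + 1) := tail_pos hq (by omega)
    have p3 : 0 ≤ Tail q n (i + 1) := tail_nonneg hq _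
    have p4 : 0 ≤ Tail q n (i + d + 2) := tail_nonneg hq _
    have p5 : 0 ≤ Tail q n i := tail_nonneg hq _
    have key : Tail q n (i + d) * (Tail q n i * Tail q n (i + d + 2))
        ≤ Tail q n (i + d) * (Tail q n (i + 1) * Tail q n (i + d + 1)) := by
      nlinarith
    have := le_of_mul_le_mul_left key p1
    calc Tail q n i * Tail q n (i + (d + 1) + 1) = Tail q n i * Tail q n (i + d + 2) := by ring_nf
      _ ≤ Tail q n (i + 1) * Tail q n (i + d + 1) := this
      _ = Tail q n (i + 1) * Tail q n (i + (d + 1)) := by ring_nf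

private lemma lemC''aux (hq : ∀ k ≤ n, 0 < q k)
    (hr : ∀ i j, i ≤ j → j + 1 ≤ n → q i * q (j + 1) ≤ q (i + 1) * q j) :
    ∀ a b, a ≤ b + 1 → a + b ≤ n →
    Tail q n 0 * Tail q n (a + b) ≤ Tail q n a * Tail q n b := by
  intro a
  induction a with
  | zero => intro b _ _; simp
  | succ a ih =>
    intro b hab habn
    have h1 := lemC' hq hr (b - a) a (by omega)
    rw [show a + (b - a) = b by omega] at h1
    have h2 := ih (b + 1) (by omega) (by omega)
    rw [show a + (b + 1) = a + 1 + b by omega] at h2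
    calc Tail q n 0 * Tail q n (a + 1 + b) ≤ Tail q n a * Tail q n (b + 1) := h2
      _ ≤ Tail q n (a + 1) * Tail q n b := h1
      
private lemma lemC'' (hq : ∀ k ≤ n, 0 < q k)
    (hr : ∀ i j, i ≤ j → j + 1 ≤ n → q i * q (j + 1) ≤ q (i + 1) * q j)
    {a b : ℕ} (habn : a + b ≤ n) :
    Tail q n 0 * Tail q n (a + b) ≤ Tail q n a * Tail q n b := by
  rcases le_or_gt a (b + 1) with h | h
  · exact lemC''aux hq hr a b h habn
  · have := lemC''aux hq hr b a (by omega) (by omega)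
    rw [show b + a = a + b by omega] at this
    rw [mul_comm (Tail q n a)]
    exact this
end TailLemmas



private lemma sum_range_cast_succ (s : ℕ) :
    ∑ i ∈ Finset.range s, ((i : ℝ) + 1) = s * (s + 1) / 2 := by
  induction s with
  | zero => simp
  | succ k ih => rw [Finset.sum_range_succ, ih]; push_cast; ring

private lemma tail_eq_ite (q : ℕ → ℝ) (n i : ℕ) :
    Tail q n i = ∑ k ∈ Finset.range (n + 1), if i ≤ k then q k else 0 := by
  rw [Tail, ← Finset.sum_Ico_eq_sum_range (fun k => q k) i (n+1), ← Finset.sum_filter]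
  apply Finset.sum_congr
  · ext x; simp [Finset.mem_Ico, Finset.mem_filter, Finset.mem_range]; omega
  · intros; rfl

private lemma filter_le_range (k n : ℕ) (hk : k ≤ n) :
    Finset.filter (fun i => i ≤ k) (Finset.range (n + 1)) = Finset.range (k + 1) := by
  ext x; simp [Finset.mem_filter, Finset.mem_range]; omega

private lemma tail_I1 (q : ℕ → ℝ) (n : ℕ) :
    ∑ i ∈ Finset.range (n + 1), Tail q n i
      = ∑ k ∈ Finset.range (n + 1), ((k : ℝ) + 1) * q k := by
  have h : ∀ i ∈ Finset.range (n+1), Tail q n i = ∑ k ∈ Finset.range (n + 1), if i ≤ k then q k else 0 :=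
    fun i _ => tail_eq_ite q n i
  rw [Finset.sum_congr rfl h, Finset.sum_comm]
  apply Finset.sum_congr rfl
  intro k hk
  simp only [Finset.mem_range] at hk
  rw [← Finset.sum_filter, filter_le_range k n (by omega), Finset.sum_const, Finset.card_range,
    nsmul_eq_mul]
  push_cast; ring

private lemma tail_I2 (q : ℕ → ℝ) (n : ℕ) :
    2 * ∑ i ∈ Finset.range (n + 1), ((i : ℝ) + 1) * Tail q n i
      = ∑ k ∈ Finset.range (n + 1), ((k : ℝ) + 1) * ((k : ℝ) + 2) * q k := by
  have h : ∀ i ∈ Finset.range (n+1), ((i : ℝ) + 1) * Tail q n i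
      = ∑ k ∈ Finset.range (n + 1), if i ≤ k then ((i : ℝ) + 1) * q k else 0 := by
    intro i _
    rw [tail_eq_ite q n i, Finset.mul_sum]
    apply Finset.sum_congr rfl
    intro k _
    split <;> simp
  rw [Finset.sum_congr rfl h, Finset.sum_comm, Finset.mul_sum]
  apply Finset.sum_congr rfl
  intro k hk
  simp only [Finset.mem_range] at hk
  rw [← Finset.sum_filter, filter_le_range k n (by omega), ← Finset.sum_mul,
    sum_range_cast_succ]
  push_cast; ring

section Key
variable {q : ℕ → ℝ} {n : ℕ}

private lemma key_core (hn1 : 1 ≤ n) (hq : ∀ k ≤ n, 0 < q k)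
    (hr : ∀ i j, i ≤ j → j + 1 ≤ n → q i * q (j + 1) ≤ q (i + 1) * q j) :
    Tail q n 0 * ∑ i ∈ range (n+1), ((i:ℝ)+1) * Tail q n i
      < (∑ i ∈ range (n+1), Tail q n i) ^ 2 := by
  have e1 : Tail q n 0 * ∑ i ∈ range (n+1), ((i:ℝ)+1) * Tail q n i
      = ∑ i ∈ range (n+1), ∑ _a ∈ range (i+1), Tail q n 0 * Tail q n i := by
    rw [Finset.mul_sum]; apply sum_congr rfl; intro i _
    rw [Finset.sum_const, card_range, nsmul_eq_mul]; push_cast; ring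
  have e2 : ∑ i ∈ range (n+1), ∑ _a ∈ range (i+1), Tail q n 0 * Tail q n i
      ≤ ∑ i ∈ range (n+1), ∑ a ∈ range (i+1), Tail q n a * Tail q n (i - a) := by
    apply sum_le_sum; intro i hi; apply sum_le_sum; intro a ha
    simp only [mem_range] at hi ha
    have h := lemC'' hq hr (a := a) (b := i - a) (by omega)
    rw [show a + (i - a) = i by omega] at h
    exact h
  have e3 : ∑ i ∈ range (n+1), ∑ a ∈ range (i+1), Tail q n a * Tail q n (i - a)
      = ∑ p ∈ (range (n+1) ×ˢ range (n+1)).filter (fun p => p.1 + p.2 ≤ n),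
          Tail q n p.1 * Tail q n p.2 := by
    rw [Finset.sum_sigma' (range (n+1)) (fun i => range (i+1))]
    apply Finset.sum_nbij' (i := fun x => (x.2, x.1 - x.2)) (j := fun p => ⟨p.1 + p.2, p.1⟩)
    · intro a ha
      simp only [Finset.mem_sigma, mem_range] at ha
      simp only [Finset.mem_filter, Finset.mem_product, mem_range]
      omega
    · intro a ha
      simp only [Finset.mem_filter, Finset.mem_product, mem_range] at ha
      simp only [Finset.mem_sigma, mem_range]
      omega
    · intro a ha
      obtain ⟨i, s⟩ := a
      simp only [Finset.mem_sigma, mem_range] at ha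
      rw [show s + (i - s) = i by omega]
    · intro a ha
      obtain ⟨x, y⟩ := a
      simp only [Finset.mem_filter, Finset.mem_product, mem_range] at ha
      rw [show x + y - x = y by omega]
    · intro a ha
      simp only [Finset.mem_sigma, mem_range] at ha
      rfl
  have e4 : ∑ p ∈ (range (n+1) ×ˢ range (n+1)).filter (fun p => p.1 + p.2 ≤ n),
          Tail q n p.1 * Tail q n p.2
      < ∑ p ∈ range (n+1) ×ˢ range (n+1), Tail q n p.1 * Tail q n p.2 := by
    apply Finset.sum_lt_sum_of_subset (Finset.filter_subset _ _) (i := (n, n))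
    · simp [Finset.mem_product]
    · simp only [Finset.mem_filter, Finset.mem_product, mem_range, not_and]
      intro _; omega
    · exact mul_pos (tail_pos hq le_rfl) (tail_pos hq le_rfl)
    · intro p _ _
      exact mul_nonneg (tail_nonneg hq _) (tail_nonneg hq _)
  have e5 : ∑ p ∈ range (n+1) ×ˢ range (n+1), Tail q n p.1 * Tail q n p.2
      = (∑ i ∈ range (n+1), Tail q n i) ^ 2 := by
    rw [Finset.sum_product, sq, Finset.sum_mul_sum]
  calc Tail q n 0 * ∑ i ∈ range (n+1), ((i:ℝ)+1) * Tail q n i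
      = ∑ i ∈ range (n+1), ∑ _a ∈ range (i+1), Tail q n 0 * Tail q n i := e1
    _ ≤ ∑ i ∈ range (n+1), ∑ a ∈ range (i+1), Tail q n a * Tail q n (i - a) := e2
    _ = _ := e3
    _ < _ := e4
    _ = _ := e5

private lemma tail_zero_eq : Tail q n 0 = ∑ k ∈ range (n+1), q k := by
  simp [Tail]

private lemma keyIneq (hn1 : 1 ≤ n) (hq : ∀ k ≤ n, 0 < q k)
    (hr : ∀ i j, i ≤ j → j + 1 ≤ n → q i * q (j + 1) ≤ q (i + 1) * q j) :
    (∑ k ∈ range (n+1), q k) * (∑ k ∈ range (n+1), ((k:ℝ)+1) * ((k:ℝ)+2) * q k)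
      < 2 * (∑ k ∈ range (n+1), ((k:ℝ)+1) * q k) ^ 2 := by
  rw [← tail_I1 q n, ← tail_I2 q n, ← tail_zero_eq]
  have := key_core hn1 hq hr
  nlinarith [this]
end Key

private noncomputable def cC (m j : ℕ) : ℝ :=
  if j ≤ m then 1 / (Nat.factorial j : ℝ) else 1 / ((Nat.factorial m : ℝ) * (m : ℝ) ^ (j - m))

private lemma cC_pos (m j : ℕ) (hm : 1 ≤ m) : 0 < cC m j := by
  unfold cC
  split
  · positivity
  · have : (0:ℝ) < m := by exact_mod_cast hm
    positivity

private lemma aCoef_eq (m j : ℕ) (hm : 1 ≤ m) (r : ℝ) : aCoef m j r = cC m j * r ^ j := by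
  unfold aCoef cC
  split
  · ring
  · rename_i h
    push_neg at h
    have hm0 : (m : ℝ) ≠ 0 := by positivity
    rw [div_pow, div_mul_div_comm, ← pow_add]
    rw [show m + (j - m) = j by omega]
    ring

private lemma cC_step (m j : ℕ) (hm : 1 ≤ m) :
    cC m j = (min (j + 1) m : ℕ) * cC m (j + 1) := by
  have hm0 : (m:ℝ) ≠ 0 := by positivity
  have hfm : (Nat.factorial m : ℝ) ≠ 0 := by positivity
  rcases le_or_gt (j + 1) m with h | h
  · have hj : j ≤ m := by omega
    rw [show min (j+1) m = j + 1 by omega]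
    unfold cC
    rw [if_pos hj, if_pos h]
    rw [Nat.factorial_succ]
    push_cast
    have : (Nat.factorial j : ℝ) ≠ 0 := by positivity
    field_simp
  · rw [show min (j+1) m = m by omega]
    rcases Nat.eq_or_lt_of_le (show m ≤ j by omega) with he | hlt
    · subst he
      unfold cC
      rw [if_pos le_rfl, if_neg (by omega)]
      rw [show m + 1 - m = 1 by omega, pow_one]
      field_simp
    · unfold cC
      rw [if_neg (by omega), if_neg (by omega)]
      rw [show j + 1 - m = (j - m) + 1 by omega, pow_succ]
      have : ((m:ℝ)) ^ (j - m) ≠ 0 := by positivity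
      field_simp

-- ratio monotonicity: for w ≤ u,  cC (u+1) * cC w ≤ cC u * cC (w+1)
private lemma cC_ratio (m : ℕ) (hm : 1 ≤ m) {w u : ℕ} (hwu : w ≤ u) :
    cC m (u + 1) * cC m w ≤ cC m u * cC m (w + 1) := by
  rw [cC_step m u hm, cC_step m w hm]
  have h1 : (min (w + 1) m : ℕ) ≤ (min (u + 1) m : ℕ) := by omega
  have h1' : ((min (w + 1) m : ℕ) : ℝ) ≤ ((min (u + 1) m : ℕ) : ℝ) := by exact_mod_cast h1
  have p12 := mul_pos (cC_pos m (u + 1) hm) (cC_pos m (w + 1) hm)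
  nlinarith [mul_le_mul_of_nonneg_right h1' (le_of_lt p12)]


private noncomputable def Pf (n : ℕ) (b : ℕ → ℝ) (t : ℝ) : ℝ :=
  ∑ j ∈ Finset.range (n + 1), b j * t ^ j
private noncomputable def Pf1 (n : ℕ) (b : ℕ → ℝ) (t : ℝ) : ℝ :=
  ∑ j ∈ Finset.range (n + 1), b j * ((j : ℝ) * t ^ (j - 1))
private noncomputable def Pf2 (n : ℕ) (b : ℕ → ℝ) (t : ℝ) : ℝ :=
  ∑ j ∈ Finset.range (n + 1), b j * ((j : ℝ) * (((j - 1 : ℕ) : ℝ) * t ^ (j - 1 - 1)))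

section Calc
variable {n : ℕ} {b : ℕ → ℝ} {t : ℝ}

private lemma hPd (n : ℕ) (b : ℕ → ℝ) (t : ℝ) : HasDerivAt (Pf n b) (Pf1 n b t) t := by
  apply HasDerivAt.fun_sum
  intro j _
  exact (hasDerivAt_pow j t).const_mul (b j)

private lemma hP1d (n : ℕ) (b : ℕ → ℝ) (t : ℝ) : HasDerivAt (Pf1 n b) (Pf2 n b t) t := by
  apply HasDerivAt.fun_sum
  intro j _
  exact (((hasDerivAt_pow (j - 1) t).const_mul ((j : ℝ))).const_mul (b j))

private lemma hPpos (hb : ∀ j, 0 < b j) (ht : 0 < t) : 0 < Pf n b t := by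
  apply Finset.sum_pos
  · intro j _
    exact mul_pos (hb j) (pow_pos ht j)
  · simp

private lemma id1 (n : ℕ) (b : ℕ → ℝ) (t : ℝ) :
    t * Pf1 n b t = ∑ j ∈ Finset.range (n + 1), (j : ℝ) * (b j * t ^ j) := by
  rw [Pf1, Finset.mul_sum]
  apply Finset.sum_congr rfl
  intro j _
  match j with
  | 0 => simp
  | (k+1) =>
    rw [show k + 1 - 1 = k by omega]
    push_cast
    ring

private lemma id2 (n : ℕ) (b : ℕ → ℝ) (t : ℝ) :
    t ^ 2 * Pf2 n b t = ∑ j ∈ Finset.range (n + 1), (j : ℝ) * ((j : ℝ) - 1) * (b j * t ^ j) := by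
  rw [Pf2, Finset.mul_sum]
  apply Finset.sum_congr rfl
  intro j _
  match j with
  | 0 => simp
  | 1 => norm_num
  | (k+2) =>
    rw [show k + 2 - 1 = k + 1 by omega, show k + 1 - 1 = k by omega]
    push_cast
    ring

private noncomputable def SA (n : ℕ) (b : ℕ → ℝ) (t : ℝ) : ℝ :=
  ∑ j ∈ Finset.range (n + 1), (((n : ℝ) + 1) - j) * (b j * t ^ j)
private noncomputable def SC (n : ℕ) (b : ℕ → ℝ) (t : ℝ) : ℝ :=
  ∑ j ∈ Finset.range (n + 1), (((n : ℝ) + 1) - j) * (((n : ℝ) + 2) - j) * (b j * t ^ j)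

private lemma eSA (n : ℕ) (b : ℕ → ℝ) (t : ℝ) :
    ((n : ℝ) + 1) * Pf n b t - t * Pf1 n b t = SA n b t := by
  rw [id1, Pf, Finset.mul_sum, ← Finset.sum_sub_distrib]
  apply Finset.sum_congr rfl
  intro j _
  ring

private lemma eSC (n : ℕ) (b : ℕ → ℝ) (t : ℝ) :
    ((n : ℝ) + 1) * ((n : ℝ) + 2) * Pf n b t - (2 * (n : ℝ) + 2) * (t * Pf1 n b t)
      + t ^ 2 * Pf2 n b t = SC n b t := by
  rw [id1, id2, Pf, Finset.mul_sum, Finset.mul_sum, ← Finset.sum_sub_distrib,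
    ← Finset.sum_add_distrib]
  apply Finset.sum_congr rfl
  intro j _
  ring

private lemma SA_pos (hb : ∀ j, 0 < b j) (ht : 0 < t) : 0 < SA n b t := by
  apply Finset.sum_pos'
  · intro j hj
    simp only [Finset.mem_range] at hj
    have : (j : ℝ) ≤ n := by exact_mod_cast Nat.lt_succ_iff.mp hj
    have h2 : 0 < b j * t ^ j := mul_pos (hb j) (pow_pos ht j)
    nlinarith
  · refine ⟨0, by simp, ?_⟩
    have h2 : 0 < b 0 * t ^ 0 := mul_pos (hb 0) (pow_pos ht 0)
    push_cast
    nlinarith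
end Calc

section Main
variable {n : ℕ} {b : ℕ → ℝ} {cn t : ℝ}

private lemma Kpos (hn1 : 1 ≤ n) (hb : ∀ j, 0 < b j)
    (hbr : ∀ w u, w ≤ u → u + 1 ≤ n → b (u + 1) * b w ≤ b u * b (w + 1)) (ht : 0 < t) :
    Pf n b t * SC n b t < 2 * SA n b t ^ 2 := by
  set q : ℕ → ℝ := fun k => b (n - k) * t ^ (n - k) with hqdef
  have hq : ∀ k ≤ n, 0 < q k := fun k _ => mul_pos (hb _) (pow_pos ht _)
  have hr : ∀ i j, i ≤ j → j + 1 ≤ n → q i * q (j + 1) ≤ q (i + 1) * q j := by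
    intro i j hij hjn
    have hbb : b (n - i) * b (n - j - 1) ≤ b (n - i - 1) * b (n - j) := by
      have h := hbr (n - j - 1) (n - i - 1) (by omega) (by omega)
      rw [show n - i - 1 + 1 = n - i by omega, show n - j - 1 + 1 = n - j by omega] at h
      exact h
    simp only [hqdef]
    rw [show n - (j + 1) = n - j - 1 by omega, show n - (i + 1) = n - i - 1 by omega]
    have hE : (n - i) + (n - j - 1) = (n - i - 1) + (n - j) := by omega
    calc b (n - i) * t ^ (n - i) * (b (n - j - 1) * t ^ (n - j - 1))
        = (b (n - i) * b (n - j - 1)) * t ^ ((n - i) + (n - j - 1)) := by rw [pow_add]; ring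
      _ ≤ (b (n - i - 1) * b (n - j)) * t ^ ((n - i) + (n - j - 1)) :=
          mul_le_mul_of_nonneg_right hbb (le_of_lt (pow_pos ht _))
      _ = b (n - i - 1) * t ^ (n - i - 1) * (b (n - j) * t ^ (n - j)) := by rw [hE, pow_add]; ring
  have hkey := keyIneq hn1 hq hr
  have r0 : Pf n b t = ∑ k ∈ range (n + 1), q k := by
    have h := Finset.sum_range_reflect (fun j => b j * t ^ j) (n + 1)
    simp only [Nat.add_sub_cancel] at h
    rw [Pf, ← h]
  have r1 : SA n b t = ∑ k ∈ range (n + 1), ((k : ℝ) + 1) * q k := by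
    have h := Finset.sum_range_reflect (fun j => (((n : ℝ) + 1) - j) * (b j * t ^ j)) (n + 1)
    simp only [Nat.add_sub_cancel] at h
    rw [SA, ← h]
    apply Finset.sum_congr rfl
    intro k hk
    simp only [Finset.mem_range] at hk
    rw [Nat.cast_sub (by omega : k ≤ n)]
    ring
  have r2 : SC n b t = ∑ k ∈ range (n + 1), ((k : ℝ) + 1) * ((k : ℝ) + 2) * q k := by
    have h := Finset.sum_range_reflect
      (fun j => (((n : ℝ) + 1) - j) * (((n : ℝ) + 2) - j) * (b j * t ^ j)) (n + 1)
    simp only [Nat.add_sub_cancel] at h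
    rw [SC, ← h]
    apply Finset.sum_congr rfl
    intro k hk
    simp only [Finset.mem_range] at hk
    rw [Nat.cast_sub (by omega : k ≤ n)]
    ring
  rw [r0, r1, r2]
  exact hkey

private noncomputable def F1fun (n : ℕ) (b : ℕ → ℝ) (cn : ℝ) (t : ℝ) : ℝ :=
  (cn * ((n : ℝ) + 1) * (t ^ n * Pf n b t) - cn * (t ^ (n + 1) * Pf1 n b t)) / (Pf n b t) ^ 2

private lemma hasDeriv_F (hb : ∀ j, 0 < b j) (cn : ℝ) (ht : 0 < t) :
    HasDerivAt (fun s => cn * s ^ (n + 1) / Pf n b s) (F1fun n b cn t) t := by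
  have h1 := (hasDerivAt_pow (n + 1) t).const_mul cn
  have h2 := h1.div (hPd n b t) (ne_of_gt (hPpos hb ht))
  refine h2.congr_deriv ?_
  unfold F1fun
  rw [Nat.add_sub_cancel]
  push_cast
  ring

private lemma F1_pos (hb : ∀ j, 0 < b j) (hcn : 0 < cn) (ht : 0 < t) :
    0 < F1fun n b cn t := by
  have hnum : cn * ((n : ℝ) + 1) * (t ^ n * Pf n b t) - cn * (t ^ (n + 1) * Pf1 n b t)
      = cn * t ^ n * SA n b t := by
    rw [← eSA, pow_succ]; ring
  rw [F1fun, hnum]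
  have h1 := SA_pos (n := n) hb ht
  have h2 := hPpos (n := n) hb ht
  positivity

private lemma hasDeriv_F1 (hn1 : 1 ≤ n) (hb : ∀ j, 0 < b j)
    (hbr : ∀ w u, w ≤ u → u + 1 ≤ n → b (u + 1) * b w ≤ b u * b (w + 1))
    (hcn : 0 < cn) (ht : 0 < t) :
    ∃ y, HasDerivAt (F1fun n b cn) y t ∧ 0 < y := by
  have hP := hPpos (n := n) hb ht
  have h1 := ((hasDerivAt_pow n t).mul (hPd n b t)).const_mul (cn * ((n : ℝ) + 1))
  have h2 := ((hasDerivAt_pow (n + 1) t).mul (hP1d n b t)).const_mul cn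
  have hNum := h1.sub h2
  have hDen := (hPd n b t).pow 2
  have hne : (Pf n b t) ^ 2 ≠ 0 := by positivity
  have hdiv := hNum.div hDen hne
  refine ⟨_, hdiv, ?_⟩
  have hnum_eq :
      (cn * ((n : ℝ) + 1) * ((n : ℝ) * t ^ (n - 1) * Pf n b t + t ^ n * Pf1 n b t)
          - cn * (((n : ℕ) + 1 : ℕ) * t ^ (n + 1 - 1) * Pf1 n b t + t ^ (n + 1) * Pf2 n b t))
          * Pf n b t ^ 2
        - (cn * ((n : ℝ) + 1) * (t ^ n * Pf n b t) - cn * (t ^ (n + 1) * Pf1 n b t))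
          * ((2 : ℕ) * Pf n b t ^ (2 - 1) * Pf1 n b t)
      = cn * t ^ (n - 1) * (2 * SA n b t ^ 2 - Pf n b t * SC n b t) * Pf n b t := by
    rw [← eSA, ← eSC, Nat.add_sub_cancel]
    have e1 : t ^ n = t ^ (n - 1) * t := by
      rw [← pow_succ]; congr 1; omega
    have e2 : t ^ (n + 1) = t ^ (n - 1) * t * t := by
      rw [← pow_succ, ← pow_succ]; congr 1; omega
    rw [e2, e1]
    push_cast
    ring
  simp only [Pi.pow_apply, Pi.sub_apply, Pi.mul_apply]
  rw [hnum_eq]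
  have hK := Kpos hn1 hb hbr ht
  have htp : 0 < t ^ (n - 1) := pow_pos ht _
  have : 0 < 2 * SA n b t ^ 2 - Pf n b t * SC n b t := by linarith
  positivity
end Main


private theorem mainAux (n : ℕ) (hn1 : 1 ≤ n) (b : ℕ → ℝ) (hb : ∀ j, 0 < b j)
    (hbr : ∀ w u, w ≤ u → u + 1 ≤ n → b (u + 1) * b w ≤ b u * b (w + 1))
    (cn : ℝ) (hcn : 0 < cn) (φ : ℝ → ℝ) (hφ0 : φ 0 = 0)
    (hφF : ∀ t ∈ Set.Ioi (0 : ℝ), φ t = cn * t ^ (n + 1) / Pf n b t)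
    (hφb : ∀ t ∈ Set.Ici (0 : ℝ), 0 ≤ φ t ∧ φ t ≤ t) :
    StrictMonoOn φ (Set.Ici (0 : ℝ)) ∧ StrictConvexOn ℝ (Set.Ici (0 : ℝ)) φ := by
  have hcont : ContinuousOn φ (Set.Ici (0 : ℝ)) := by
    intro x hx
    simp only [Set.mem_Ici] at hx
    rcases eq_or_lt_of_le hx with he | hx
    · rw [← he]
      rw [ContinuousWithinAt, hφ0]
      apply squeeze_zero'
      · exact Filter.eventually_of_mem self_mem_nhdsWithin fun t ht => (hφb t ht).1
      · exact Filter.eventually_of_mem self_mem_nhdsWithin fun t ht => (hφb t ht).2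
      · exact Filter.tendsto_id.mono_left nhdsWithin_le_nhds
    · have hev : φ =ᶠ[nhds x] (fun s => cn * s ^ (n + 1) / Pf n b s) :=
        Filter.eventually_of_mem (isOpen_Ioi.mem_nhds hx) hφF
      have hFc : ContinuousAt (fun s => cn * s ^ (n + 1) / Pf n b s) x := by
        apply ContinuousAt.div
        · fun_prop
        · exact (hPd n b x).continuousAt
        · exact ne_of_gt (hPpos (n := n) hb hx)
      exact (hFc.congr hev.symm).continuousWithinAt
  have hderiv : ∀ x ∈ Set.Ioi (0 : ℝ), deriv φ x = F1fun n b cn x := by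
    intro x hx
    have hev : φ =ᶠ[nhds x] (fun s => cn * s ^ (n + 1) / Pf n b s) :=
      Filter.eventually_of_mem (isOpen_Ioi.mem_nhds hx) hφF
    rw [hev.deriv_eq]
    exact (hasDeriv_F hb cn hx).deriv
  constructor
  · apply strictMonoOn_of_deriv_pos (convex_Ici 0) hcont
    intro x hx
    rw [interior_Ici] at hx
    rw [hderiv x hx]
    exact F1_pos hb hcn hx
  · apply strictConvexOn_of_deriv2_pos (convex_Ici 0) hcont
    intro x hx
    rw [interior_Ici] at hx
    show 0 < deriv^[2] φ x
    have h2 : deriv^[2] φ x = deriv (deriv φ) x := by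
      rw [Function.iterate_succ, Function.iterate_one]; rfl
    rw [h2]
    have hev2 : deriv φ =ᶠ[nhds x] F1fun n b cn :=
      Filter.eventually_of_mem (isOpen_Ioi.mem_nhds hx) hderiv
    rw [hev2.deriv_eq]
    obtain ⟨y, hy, hypos⟩ := hasDeriv_F1 hn1 hb hbr hcn hx
    rw [hy.deriv]
    exact hypos

/-- the loss-rate function `φ` is strictly increasing and strictly convex on `[0,∞)`. -/
theorem stmt_4 (m n : ℕ) (hm : 1 ≤ m) (hn : m ≤ n) (μ : ℝ) (hμ : 0 < μ)
    (φ : ℝ → ℝ) (hφ0 : φ 0 = 0)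
    (hφ : ∀ t : ℝ, 0 < t → φ t = t * Bmn m n (t / μ)) :
    StrictMonoOn φ (Set.Ici (0 : ℝ)) ∧ StrictConvexOn ℝ (Set.Ici (0 : ℝ)) φ := by
  have hn1 : 1 ≤ n := le_trans hm hn
  have hμ0 : μ ≠ 0 := ne_of_gt hμ
  apply mainAux n hn1 (fun j => cC m j * μ ^ (n - j))
    (fun j => mul_pos (cC_pos m j hm) (pow_pos hμ _)) ?hbr (cC m n) (cC_pos m n hm) φ hφ0
    ?hphiF ?hphib
  case hbr =>
    intro w u hwu hun
    have hE : (n - (u + 1)) + (n - w) = (n - u) + (n - (w + 1)) := by omega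
    calc cC m (u + 1) * μ ^ (n - (u + 1)) * (cC m w * μ ^ (n - w))
        = (cC m (u + 1) * cC m w) * μ ^ ((n - (u + 1)) + (n - w)) := by rw [pow_add]; ring
      _ ≤ (cC m u * cC m (w + 1)) * μ ^ ((n - (u + 1)) + (n - w)) :=
          mul_le_mul_of_nonneg_right (cC_ratio m hm hwu) (le_of_lt (pow_pos hμ _))
      _ = cC m u * μ ^ (n - u) * (cC m (w + 1) * μ ^ (n - (w + 1))) := by
          rw [hE, pow_add]; ring
  case hphiF =>
    intro t ht
    simp only [Set.mem_Ioi] at ht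
    have hr : 0 < t / μ := div_pos ht hμ
    have hD : ∑ j ∈ Finset.range (n + 1), aCoef m j (t / μ)
        = ∑ j ∈ Finset.range (n + 1), cC m j * (t / μ) ^ j :=
      Finset.sum_congr rfl fun j _ => aCoef_eq m j hm (t / μ)
    have hDpos : 0 < ∑ j ∈ Finset.range (n + 1), cC m j * (t / μ) ^ j := by
      apply Finset.sum_pos
      · intro j _
        exact mul_pos (cC_pos m j hm) (pow_pos hr j)
      · simp
    have hPf : Pf n (fun j => cC m j * μ ^ (n - j)) t
        = μ ^ n * ∑ j ∈ Finset.range (n + 1), cC m j * (t / μ) ^ j := by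
      rw [Pf, Finset.mul_sum]
      apply Finset.sum_congr rfl
      intro j hj
      simp only [Finset.mem_range] at hj
      have hμn : μ ^ n = μ ^ j * μ ^ (n - j) := by
        rw [← pow_add]; congr 1; omega
      rw [div_pow, hμn]
      field_simp
    have hgen : ∀ D : ℝ, 0 < D →
        t * (cC m n * (t / μ) ^ n / D) = cC m n * t ^ (n + 1) / (μ ^ n * D) := by
      intro D hD
      rw [div_pow]
      have hDne : D ≠ 0 := ne_of_gt hD
      have hμn0 : (μ : ℝ) ^ n ≠ 0 := pow_ne_zero _ hμ0
      field_simp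
      ring
    rw [hφ t ht, Bmn, hD, aCoef_eq m n hm, hPf]
    exact hgen _ hDpos
  case hphib =>
    intro t ht
    simp only [Set.mem_Ici] at ht
    rcases eq_or_lt_of_le ht with he | ht
    · constructor <;> rw [← he, hφ0]
    · have hr : 0 < t / μ := div_pos ht hμ
      have hnum : 0 < aCoef m n (t / μ) := by
        rw [aCoef_eq m n hm]
        exact mul_pos (cC_pos m n hm) (pow_pos hr n)
      have hle : aCoef m n (t / μ) ≤ ∑ j ∈ Finset.range (n + 1), aCoef m j (t / μ) := by
        apply Finset.single_le_sum (f := fun j => aCoef m j (t / μ))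
        · intro j _
          rw [aCoef_eq m j hm]
          exact le_of_lt (mul_pos (cC_pos m j hm) (pow_pos hr j))
        · simp
      have hB1 : Bmn m n (t / μ) ≤ 1 := by
        rw [Bmn, div_le_one (lt_of_lt_of_le hnum hle)]
        exact hle
      have hB0 : 0 ≤ Bmn m n (t / μ) :=
        le_of_lt (div_pos hnum (lt_of_lt_of_le hnum hle))
      constructor
      · rw [hφ t ht]; positivity
      · rw [hφ t ht]
        nlinarith
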